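/- Let a ∈ (0, 2/3), p ∈ (0,1), and x ∈ [0, 1/(1−a)]. Then for every n ≥ 1, almost surely on the event {τ_x > n}: for every 0 ≤ k ≤ n the iterate T_a^k(X_n^x) is defined (the first k points of the orbit of X_n^x under T_a remain in the domain of T_a) and X_{n−k}^x = T_a^k(X_n^x). In particular, the killed chain is deterministic in reversed time. -/

import Mathlib

open MeasureTheory Filter Set ProbabilityTheory
open scoped ENNReal Classical Topology

noncomputable section

/-- The map `T_a` (extended to a total function; on the paper's domain it agrees with `T_a`,
and `T_{2/3}(1) = 0`). -/
def Tmap (a x : ℝ) : ℝ := if x < 1 then (x + 1) / a else (x - 1) / a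

/-- `κ_a(x) ∈ ℕ∞`: the first entry time of the orbit of `x` under `T_a` into the hole
`I_a = ((2a-1)/(1-a), 1)`. -/
def kappa (a x : ℝ) : ℕ∞ :=
  ⨅ (k : ℕ) (_ : (Tmap a)^[k] x ∈ Set.Ioo ((2 * a - 1) / (1 - a)) 1), (k : ℕ∞)

/-- `δ_k(x)` -/
def deltaF (a x : ℝ) (k : ℕ) : ℝ := if (Tmap a)^[k] x < 1 then 1 else 0

/-- `L_k(x)` -/
def Lnat (a x : ℝ) (k : ℕ) : ℕ :=
  ((Finset.range k).filter fun i => (Tmap a)^[i] x < 1).card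

/-- the `k`-th term of the series `∑_{k=0}^{κ_a(x)} δ_k(x) (p/λ)^{k+1} (q/p)^{L_k(x)}` -/
def lamTerm (a p x lam : ℝ) (k : ℕ) : ℝ :=
  if (k : ℕ∞) ≤ kappa a x then
    deltaF a x k * (p / lam) ^ (k + 1) * ((1 - p) / p) ^ (Lnat a x k)
  else 0

/-- `λ` is a positive solution of the equation defining `λ_a`. -/
def IsLamSol (a p lam : ℝ) : Prop := 0 < lam ∧ HasSum (lamTerm a p 0 lam) 1

/-- `V(x) = ∑_{k=0}^{κ_a} (p/λ_a)^k (q/p)^{L_k} 1{T_a^k(0) ≤ x}` -/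
def Vfun (a p lam x : ℝ) : ℝ :=
  ∑' k : ℕ, if (k : ℕ∞) ≤ kappa a 0 ∧ (Tmap a)^[k] 0 ≤ x then
    (p / lam) ^ k * ((1 - p) / p) ^ (Lnat a 0 k) else 0

/-- `F̄_a(y) = ∑_{k=0}^{κ_a(y)} δ_k(y) (p/λ_a)^{k+1} (q/p)^{L_k(y)}`. -/
def Fbar (a p lam y : ℝ) : ℝ := ∑' k, lamTerm a p y lam k

theorem deterministic_in_reversed_time
    {Ω : Type*} [MeasurableSpace Ω] (μ : Measure Ω) [IsProbabilityMeasure μ]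
    (a p : ℝ) (ha : a ∈ Set.Ioo (0 : ℝ) (2/3)) (hp : p ∈ Set.Ioo (0 : ℝ) 1)
    (ξ : ℕ → Ω → ℝ) (hmeas : ∀ n, Measurable (ξ n))
    (hindep : iIndepFun ξ μ)
    (hdist1 : ∀ n, μ {ω | ξ n ω = 1} = ENNReal.ofReal p)
    (hdist2 : ∀ n, μ {ω | ξ n ω = -1} = ENNReal.ofReal (1 - p))
    (X : ℝ → ℕ → Ω → ℝ)
    (hX0 : ∀ x ω, X x 0 ω = x)
    (hXrec : ∀ x n ω, X x (n + 1) ω = a * X x n ω + ξ (n + 1) ω)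
    (x : ℝ) (hx : x ∈ Set.Icc (0 : ℝ) (1 / (1 - a))) :
    ∀ n : ℕ, 1 ≤ n →
      ∀ᵐ ω ∂μ, (∀ k ≤ n, 0 ≤ X x k ω) →
        ∀ k ≤ n,
          (∀ j < k, (Tmap a)^[j] (X x n ω) ∈
            Set.Icc (0 : ℝ) ((2 * a - 1) / (1 - a)) ∪ Set.Icc (1 : ℝ) (1 / (1 - a))) ∧
          X x (n - k) ω = (Tmap a)^[k] (X x n ω) := by
  obtain ⟨ha0, ha23⟩ := ha
  obtain ⟨hp0, hp1⟩ := hp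
  have h1a : (0:ℝ) < 1 - a := by linarith
  intro n hn
  have hae : ∀ᵐ ω ∂μ, ∀ j : ℕ, ξ j ω = 1 ∨ ξ j ω = -1 := by
    rw [ae_all_iff]
    intro j
    have hmj := hmeas j
    have hA : MeasurableSet {ω | ξ j ω = 1} := hmj (measurableSet_singleton 1)
    have hB : MeasurableSet {ω | ξ j ω = -1} := hmj (measurableSet_singleton (-1))
    have hdisj : Disjoint {ω | ξ j ω = 1} {ω | ξ j ω = -1} := by
      rw [Set.disjoint_left]
      intro ω h1 h2
      simp only [Set.mem_setOf_eq] at h1 h2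
      rw [h1] at h2; norm_num at h2
    have hunion : μ ({ω | ξ j ω = 1} ∪ {ω | ξ j ω = -1}) = 1 := by
      rw [measure_union hdisj hB, hdist1, hdist2,
        ← ENNReal.ofReal_add (by linarith) (by linarith)]
      norm_num
    rw [ae_iff]
    have hset : {ω | ¬ (ξ j ω = 1 ∨ ξ j ω = -1)} =
        ({ω | ξ j ω = 1} ∪ {ω | ξ j ω = -1})ᶜ := by
      ext ω; simp [not_or]
    rw [hset, measure_compl (hA.union hB) (measure_ne_top μ _), hunion,
      measure_univ, tsub_self]
  filter_upwards [hae] with ω hξ hpos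
  have hub : ∀ k ≤ n, X x k ω ≤ 1 / (1 - a) := by
    intro k hk
    induction k with
    | zero => rw [hX0]; exact hx.2
    | succ m ih =>
      have hm := ih (Nat.le_of_succ_le hk)
      have haXm : a * X x m ω ≤ a * (1 / (1 - a)) :=
        mul_le_mul_of_nonneg_left hm ha0.le
      have hid : a * (1 / (1 - a)) + 1 = 1 / (1 - a) := by field_simp; ring
      rw [hXrec]
      rcases hξ (m + 1) with h | h <;> rw [h] <;> linarith
  have key : ∀ m : ℕ, 1 ≤ m → m ≤ n →
      (X x m ω ∈ Set.Icc (0:ℝ) ((2 * a - 1) / (1 - a)) ∪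
        Set.Icc (1:ℝ) (1 / (1 - a))) ∧
      Tmap a (X x m ω) = X x (m - 1) ω := by
    intro m hm1 hmn
    obtain ⟨m', rfl⟩ : ∃ m', m = m' + 1 := ⟨m - 1, by omega⟩
    have hrec := hXrec x m' ω
    have hprev0 : 0 ≤ X x m' ω := hpos m' (by omega)
    have hprevU : X x m' ω ≤ 1 / (1 - a) := hub m' (by omega)
    have hcur0 : 0 ≤ X x (m' + 1) ω := hpos (m' + 1) hmn
    have haXm : a * X x m' ω ≤ a * (1 / (1 - a)) :=
      mul_le_mul_of_nonneg_left hprevU ha0.le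
    have haXm0 : 0 ≤ a * X x m' ω := mul_nonneg ha0.le hprev0
    have hid : a * (1 / (1 - a)) + 1 = 1 / (1 - a) := by field_simp; ring
    have hid2 : a * (1 / (1 - a)) - 1 = (2 * a - 1) / (1 - a) := by
      field_simp; ring
    have hhole : (2 * a - 1) / (1 - a) < 1 := by
      rw [div_lt_one h1a]; linarith
    simp only [Nat.add_sub_cancel]
    rcases hξ (m' + 1) with h | h
    · have hge : (1:ℝ) ≤ X x (m' + 1) ω := by rw [hrec, h]; linarith
      have hle : X x (m' + 1) ω ≤ 1 / (1 - a) := by rw [hrec, h]; linarith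
      refine ⟨Or.inr ⟨hge, hle⟩, ?_⟩
      rw [Tmap, if_neg (not_lt.mpr hge), hrec, h]
      field_simp; ring
    · have hle : X x (m' + 1) ω ≤ (2 * a - 1) / (1 - a) := by
        rw [hrec, h]; linarith
      have hlt1 : X x (m' + 1) ω < 1 := lt_of_le_of_lt hle hhole
      refine ⟨Or.inl ⟨hcur0, hle⟩, ?_⟩
      rw [Tmap, if_pos hlt1, hrec, h]
      field_simp; ring
  intro k hk
  induction k with
  | zero =>
    exact ⟨fun j hj => absurd hj (Nat.not_lt_zero j), by simp⟩
  | succ m ih =>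
    obtain ⟨ihmem, iheq⟩ := ih (by omega)
    have hkey := key (n - m) (by omega) (by omega)
    constructor
    · intro j hj
      rcases Nat.lt_succ_iff_lt_or_eq.mp hj with hjm | rfl
      · exact ihmem j hjm
      · rw [← iheq]; exact hkey.1
    · rw [Function.iterate_succ_apply', ← iheq, hkey.2]
      congr 1

end
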